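/- Let φ be a 3SAT instance with N variables and m clauses, each clause a disjunction of exactly three literals, and let α = 2N + 4m + 1. Construct the 4-uniform hypergraph H(φ) as follows. Its vertices are s_1, …, s_α, t_1, …, t_α, a node for each literal x_i and ¬x_i (i = 1, …, N), and nodes z_j, z_j' for each clause j = 1, …, m. Its hyperedges are: all 4-element subsets of {s_1, …, s_α} and all 4-element subsets of {t_1, …, t_α}; for each variable x_i the hyperedges {s_1, s_2, x_i, ¬x_i} and {t_1, t_2, x_i, ¬x_i}; and for each clause j of the form a ∨ b ∨ c (a, b, c literals, ¬a denoting the node of the complementary literal of a) the four hyperedges {s_1, z_j, z_j', t_1}, {s_1, ¬a, z_j, ¬b}, {s_1, ¬a, z_j, z_j'} and {s_1, c, z_j, z_j'}. If φ is satisfiable, then there exists a cut S of H(φ) with s_1 ∈ S and t_1 ∉ S such that no hyperedge of H(φ) has split value 2 and at most 2N + 4m hyperedges have split value 1 (all remaining hyperedges having split value 0). -/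

import Mathlib

/-- The split value of a hyperedge `e` with respect to a cut `S`:
`min (|e ∩ S|, |e \ S|)`. -/
def splitVal {W : Type*} [DecidableEq W] (S e : Finset W) : ℕ :=
  min (e ∩ S).card (e \ S).card

/-- A literal over `N` boolean variables: a variable index together with a
polarity (`true` for the positive literal `x_i`, `false` for `¬x_i`). -/
abbrev Lit (N : ℕ) := Fin N × Bool

/-- The complementary literal. -/
def Lit.neg {N : ℕ} (a : Lit N) : Lit N := (a.1, !a.2)

/-- A 3SAT clause: a disjunction of exactly three literals. -/
abbrev Clause (N : ℕ) := Lit N × Lit N × Lit N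

/-- A literal is satisfied by an assignment. -/
def litSat {N : ℕ} (σ : Fin N → Bool) (a : Lit N) : Prop := σ a.1 = a.2

/-- An assignment satisfies a 3SAT instance (a conjunction of `m` clauses). -/
def Satisfies {N m : ℕ} (φ : Fin m → Clause N) (σ : Fin N → Bool) : Prop :=
  ∀ j : Fin m, litSat σ (φ j).1 ∨ litSat σ (φ j).2.1 ∨ litSat σ (φ j).2.2

/-- The vertices of the hypergraph `H(φ)`: the `s`-vertices, the `t`-vertices
(indexed by naturals), one node for each literal, and the nodes `z_j`, `z_j'`
for each clause. -/
abbrev Vtx (N m : ℕ) := ℕ ⊕ ℕ ⊕ (Lit N ⊕ Fin m × Bool)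

/-- The vertex `s_i`. -/
def sV {N m : ℕ} (i : ℕ) : Vtx N m := Sum.inl i

/-- The vertex `t_i`. -/
def tV {N m : ℕ} (i : ℕ) : Vtx N m := Sum.inr (Sum.inl i)

/-- The node of a literal. -/
def litV {N m : ℕ} (a : Lit N) : Vtx N m := Sum.inr (Sum.inr (Sum.inl a))

/-- The node `z_j` of clause `j`. -/
def zV {N m : ℕ} (j : Fin m) : Vtx N m := Sum.inr (Sum.inr (Sum.inr (j, false)))

/-- The node `z_j'` of clause `j`. -/
def zV' {N m : ℕ} (j : Fin m) : Vtx N m := Sum.inr (Sum.inr (Sum.inr (j, true)))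

/-- The two hyperedges `{s_1,s_2,x_i,¬x_i}` and `{t_1,t_2,x_i,¬x_i}` of a variable. -/
def varEdges {N m : ℕ} (i : Fin N) : Multiset (Finset (Vtx N m)) :=
  { {sV 1, sV 2, litV (i, true), litV (i, false)},
    {tV 1, tV 2, litV (i, true), litV (i, false)} }

/-- The four hyperedges `{s_1,z_j,z_j',t_1}`, `{s_1,¬a,z_j,¬b}`, `{s_1,¬a,z_j,z_j'}`
and `{s_1,c,z_j,z_j'}` of the clause `j` of the form `a ∨ b ∨ c`. -/
def clauseEdges {N m : ℕ} (φ : Fin m → Clause N) (j : Fin m) :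
    Multiset (Finset (Vtx N m)) :=
  { {sV 1, zV j, zV' j, tV 1},
    {sV 1, litV (φ j).1.neg, zV j, litV (φ j).2.1.neg},
    {sV 1, litV (φ j).1.neg, zV j, zV' j},
    {sV 1, litV (φ j).2.2, zV j, zV' j} }

/-- The hyperedge family of `H(φ)` (as a multiset): all 4-element subsets of
`{s_1,…,s_α}`, all 4-element subsets of `{t_1,…,t_α}`, the variable hyperedges
and the clause hyperedges. -/
def Hsat {N m : ℕ} (φ : Fin m → Clause N) (α : ℕ) : Multiset (Finset (Vtx N m)) :=
  ((((Finset.Icc 1 α).image (sV : ℕ → Vtx N m)).powersetCard 4).val +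
    (((Finset.Icc 1 α).image (tV : ℕ → Vtx N m)).powersetCard 4).val) +
    (Finset.univ : Finset (Fin N)).val.bind varEdges +
    (Finset.univ : Finset (Fin m)).val.bind (clauseEdges φ)

-- auxiliary lemmas
lemma splitVal_le_one {W : Type*} [DecidableEq W] (S e : Finset W)
    (h4 : e.card ≤ 4) (h : (e ∩ S).card ≠ 2) :
    splitVal S e = 0 ∨ splitVal S e = 1 := by
  have hh := Finset.card_sdiff_add_card_inter e S
  unfold splitVal
  rw [Nat.min_def]; split <;> omega

lemma splitVal_le_one' {W : Type*} [DecidableEq W] (S e : Finset W)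
    (h3 : e.card ≤ 3) :
    splitVal S e = 0 ∨ splitVal S e = 1 := by
  have hh := Finset.card_sdiff_add_card_inter e S
  have h2 : (e ∩ S).card ≤ e.card := Finset.card_le_card Finset.inter_subset_left
  unfold splitVal
  rw [Nat.min_def]; split <;> omega

lemma splitVal_of_subset {W : Type*} [DecidableEq W] (S e : Finset W)
    (h : e ⊆ S) : splitVal S e = 0 := by
  unfold splitVal
  rw [Finset.sdiff_eq_empty_iff_subset.mpr h]
  simp

lemma splitVal_of_disj {W : Type*} [DecidableEq W] (S e : Finset W)
    (h : ∀ x ∈ e, x ∉ S) : splitVal S e = 0 := by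
  unfold splitVal
  have : e ∩ S = ∅ := by
    apply Finset.eq_empty_of_forall_notMem
    intro x hx
    simp only [Finset.mem_inter] at hx
    exact h x hx.1 hx.2
  rw [this]; simp

lemma card_quad_inter {W : Type*} [DecidableEq W] (S : Finset W) (a b c d : W)
    (hab : a ≠ b) (hac : a ≠ c) (had : a ≠ d) (hbc : b ≠ c) (hbd : b ≠ d) (hcd : c ≠ d) :
    (({a,b,c,d} : Finset W) ∩ S).card =
      (if a ∈ S then 1 else 0) + (if b ∈ S then 1 else 0) +
      (if c ∈ S then 1 else 0) + (if d ∈ S then 1 else 0) := by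
  by_cases ha : a ∈ S <;> by_cases hb : b ∈ S <;> by_cases hc : c ∈ S <;> by_cases hd : d ∈ S <;>
    simp [Finset.insert_inter_of_mem, Finset.insert_inter_of_notMem,
      Finset.singleton_inter_of_mem, Finset.singleton_inter_of_notMem,
      Finset.card_insert_of_notMem, Finset.mem_insert, Finset.mem_singleton,
      ha, hb, hc, hd, hab, hac, had, hbc, hbd, hcd]

lemma card_quad_le {W : Type*} [DecidableEq W] (a b c d : W) :
    ({a,b,c,d} : Finset W).card ≤ 4 := by
  apply le_trans (Finset.card_insert_le _ _)
  have := Finset.card_insert_le b ({c,d} : Finset W)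
  have := Finset.card_insert_le c ({d} : Finset W)
  simp at *
  omega


def cutS {N m : ℕ} (φ : Fin m → Clause N) (σ : Fin N → Bool) (α : ℕ) :
    Finset (Vtx N m) :=
  ((Finset.Icc 1 α).image (sV : ℕ → Vtx N m)) ∪
  (((Finset.univ : Finset (Lit N)).filter (fun a => ¬ (σ a.1 = a.2))).image
    (litV : Lit N → Vtx N m)) ∪
  ((((Finset.univ : Finset (Fin m)).filter
      (fun j => σ (φ j).1.1 = (φ j).1.2 ∨ σ (φ j).2.1.1 = (φ j).2.1.2)) ×ˢ
      (Finset.univ : Finset Bool)).image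
    (fun p => (Sum.inr (Sum.inr (Sum.inr p)) : Vtx N m)))

lemma cutS_s {N m : ℕ} (φ : Fin m → Clause N) (σ : Fin N → Bool) (α : ℕ) (i : ℕ) :
    (sV i : Vtx N m) ∈ cutS φ σ α ↔ (1 ≤ i ∧ i ≤ α) := by
  simp [cutS, sV, litV, Finset.mem_union, Finset.mem_image, Finset.mem_Icc]

lemma cutS_t {N m : ℕ} (φ : Fin m → Clause N) (σ : Fin N → Bool) (α : ℕ) (i : ℕ) :
    (tV i : Vtx N m) ∉ cutS φ σ α := by
  simp [cutS, sV, tV, litV]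

lemma cutS_lit {N m : ℕ} (φ : Fin m → Clause N) (σ : Fin N → Bool) (α : ℕ) (a : Lit N) :
    (litV a : Vtx N m) ∈ cutS φ σ α ↔ ¬ (σ a.1 = a.2) := by
  simp [cutS, sV, litV]

lemma cutS_z {N m : ℕ} (φ : Fin m → Clause N) (σ : Fin N → Bool) (α : ℕ)
    (j : Fin m) (b : Bool) :
    (Sum.inr (Sum.inr (Sum.inr (j, b))) : Vtx N m) ∈ cutS φ σ α ↔
      (σ (φ j).1.1 = (φ j).1.2 ∨ σ (φ j).2.1.1 = (φ j).2.1.2) := by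
  simp [cutS, sV, litV]

set_option maxHeartbeats 2000000 in
theorem stmt14 {N m : ℕ} (φ : Fin m → Clause N)
    (α : ℕ) (hα : α = 2 * N + 4 * m + 1)
    (hsat : ∃ σ : Fin N → Bool, Satisfies φ σ) :
    ∃ S : Finset (Vtx N m), sV 1 ∈ S ∧ tV 1 ∉ S ∧
      (∀ e ∈ Hsat φ α, splitVal S e = 0 ∨ splitVal S e = 1) ∧
      (Hsat φ α).countP (fun e => splitVal S e = 1) ≤ 2 * N + 4 * m := by
  classical
  obtain ⟨σ, hσ⟩ := hsat
  set S : Finset (Vtx N m) := cutS φ σ α with hS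
  have hSs : ∀ i : ℕ, ((sV i : Vtx N m) ∈ S ↔ (1 ≤ i ∧ i ≤ α)) := cutS_s φ σ α
  have hSt : ∀ i : ℕ, (tV i : Vtx N m) ∉ S := cutS_t φ σ α
  have hSlit : ∀ a : Lit N, ((litV a : Vtx N m) ∈ S ↔ ¬ (σ a.1 = a.2)) := cutS_lit φ σ α
  have hSz : ∀ (j : Fin m) (b : Bool),
      ((Sum.inr (Sum.inr (Sum.inr (j, b))) : Vtx N m) ∈ S ↔
        (σ (φ j).1.1 = (φ j).1.2 ∨ σ (φ j).2.1.1 = (φ j).2.1.2)) := cutS_z φ σ α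
  have hs1 : (sV 1 : Vtx N m) ∈ S := (hSs 1).mpr ⟨le_refl 1, by omega⟩
  have hSnl : ∀ l : Lit N, ((litV l.neg : Vtx N m) ∈ S ↔ σ l.1 = l.2) := by
    intro l
    rw [Lit.neg, hSlit]
    cases hl : σ l.1 <;> cases l.2 <;> simp [hl]
  -- split value zero on the two powerset families
  have hA0 : ∀ e ∈ (((Finset.Icc 1 α).image (sV : ℕ → Vtx N m)).powersetCard 4).val,
      splitVal S e = 0 := by
    intro e he
    rw [Finset.mem_val, Finset.mem_powersetCard] at he
    apply splitVal_of_subset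
    intro x hx
    obtain ⟨i, hi, rfl⟩ := Finset.mem_image.mp (he.1 hx)
    rw [Finset.mem_Icc] at hi
    exact (hSs i).mpr hi
  have hB0 : ∀ e ∈ (((Finset.Icc 1 α).image (tV : ℕ → Vtx N m)).powersetCard 4).val,
      splitVal S e = 0 := by
    intro e he
    rw [Finset.mem_val, Finset.mem_powersetCard] at he
    apply splitVal_of_disj
    intro x hx
    obtain ⟨i, hi, rfl⟩ := Finset.mem_image.mp (he.1 hx)
    exact hSt i
  have key : ∀ e ∈ Hsat φ α, splitVal S e = 0 ∨ splitVal S e = 1 := by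
    intro e he
    rw [Hsat] at he
    simp only [Multiset.mem_add] at he
    rcases he with ((hA | hB) | hC) | hD
    · exact Or.inl (hA0 e hA)
    · exact Or.inl (hB0 e hB)
    · rw [Multiset.mem_bind] at hC
      obtain ⟨i, -, hmem⟩ := hC
      have hN : 1 ≤ N := i.pos
      have hs2 : (sV 2 : Vtx N m) ∈ S := (hSs 2).mpr ⟨by omega, by omega⟩
      simp only [varEdges, Multiset.insert_eq_cons, Multiset.mem_cons,
        Multiset.mem_singleton] at hmem
      rcases hmem with rfl | rfl
      · refine splitVal_le_one S _ (card_quad_le _ _ _ _) ?_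
        rw [card_quad_inter S _ _ _ _
          (by simp [sV]) (by simp [sV, litV]) (by simp [sV, litV])
          (by simp [sV, litV]) (by simp [sV, litV]) (by simp [litV])]
        simp only [hs1, hs2, hSlit, if_true]
        cases hi : σ i <;> simp [hi]
      · refine splitVal_le_one S _ (card_quad_le _ _ _ _) ?_
        rw [card_quad_inter S _ _ _ _
          (by simp [tV]) (by simp [tV, litV]) (by simp [tV, litV])
          (by simp [tV, litV]) (by simp [tV, litV]) (by simp [litV])]
        simp only [hSt 1, hSt 2, hSlit, if_false]
        cases hi : σ i <;> simp [hi]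
    · rw [Multiset.mem_bind] at hD
      obtain ⟨j, -, hmem⟩ := hD
      have hsatj := hσ j
      rw [litSat, litSat, litSat] at hsatj
      simp only [clauseEdges, Multiset.insert_eq_cons, Multiset.mem_cons,
        Multiset.mem_singleton] at hmem
      have hz : ((zV j : Vtx N m) ∈ S ↔
          (σ (φ j).1.1 = (φ j).1.2 ∨ σ (φ j).2.1.1 = (φ j).2.1.2)) := hSz j false
      have hz' : ((zV' j : Vtx N m) ∈ S ↔
          (σ (φ j).1.1 = (φ j).1.2 ∨ σ (φ j).2.1.1 = (φ j).2.1.2)) := hSz j true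
      rcases hmem with rfl | rfl | rfl | rfl
      · refine splitVal_le_one S _ (card_quad_le _ _ _ _) ?_
        rw [card_quad_inter S _ _ _ _
          (by simp [sV, zV]) (by simp [sV, zV']) (by simp [sV, tV])
          (by simp [zV, zV']) (by simp [zV, tV]) (by simp [zV', tV])]
        simp only [hs1, hSt 1, hz, hz', if_true, if_false]
        by_cases hp : σ (φ j).1.1 = (φ j).1.2 <;>
          by_cases hq : σ (φ j).2.1.1 = (φ j).2.1.2 <;> simp [hp, hq]
      · by_cases hdeg : (litV ((φ j).1.neg) : Vtx N m) = litV ((φ j).2.1.neg)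
        · refine splitVal_le_one' S _ ?_
          have : ({sV 1, litV (φ j).1.neg, zV j, litV (φ j).2.1.neg} : Finset (Vtx N m)) =
              {sV 1, litV (φ j).1.neg, zV j} := by
            rw [← hdeg, Finset.pair_comm (zV j) ((litV ((φ j).1.neg) : Vtx N m)),
              Finset.insert_idem]
          rw [this]
          apply le_trans (Finset.card_insert_le _ _)
          have := Finset.card_insert_le (litV ((φ j).1.neg) : Vtx N m) ({zV j} : Finset (Vtx N m))
          simp at *
          omega
        · refine splitVal_le_one S _ (card_quad_le _ _ _ _) ?_
          rw [card_quad_inter S _ _ _ _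
            (by simp [sV, litV]) (by simp [sV, zV]) (by simp [sV, litV])
            (by simp [litV, zV]) hdeg (by simp [litV, zV])]
          simp only [hs1, hSnl, hz, if_true]
          by_cases hp : σ (φ j).1.1 = (φ j).1.2 <;>
            by_cases hq : σ (φ j).2.1.1 = (φ j).2.1.2 <;> simp [hp, hq]
      · refine splitVal_le_one S _ (card_quad_le _ _ _ _) ?_
        rw [card_quad_inter S _ _ _ _
          (by simp [sV, litV]) (by simp [sV, zV]) (by simp [sV, zV'])
          (by simp [litV, zV]) (by simp [litV, zV']) (by simp [zV, zV'])]
        simp only [hs1, hSnl, hz, hz', if_true]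
        by_cases hp : σ (φ j).1.1 = (φ j).1.2 <;>
          by_cases hq : σ (φ j).2.1.1 = (φ j).2.1.2 <;> simp [hp, hq]
      · refine splitVal_le_one S _ (card_quad_le _ _ _ _) ?_
        rw [card_quad_inter S _ _ _ _
          (by simp [sV, litV]) (by simp [sV, zV]) (by simp [sV, zV'])
          (by simp [litV, zV]) (by simp [litV, zV']) (by simp [zV, zV'])]
        simp only [hs1, hSlit, hz, hz', if_true]
        by_cases hp : σ (φ j).1.1 = (φ j).1.2 <;>
          by_cases hq : σ (φ j).2.1.1 = (φ j).2.1.2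
        · simp [hp, hq]
        · simp [hp, hq]
        · simp [hp, hq]
        · have hr : σ (φ j).2.2.1 = (φ j).2.2.2 :=
            (hsatj.resolve_left hp).resolve_left hq
          simp [hp, hq, hr]
  refine ⟨S, hs1, hSt 1, key, ?_⟩
  rw [Hsat]
  rw [Multiset.countP_add, Multiset.countP_add, Multiset.countP_add]
  have c1 : Multiset.countP (fun e => splitVal S e = 1)
      (((Finset.Icc 1 α).image (sV : ℕ → Vtx N m)).powersetCard 4).val = 0 := by
    rw [Multiset.countP_eq_zero]
    intro e he
    simp [hA0 e he]
  have c2 : Multiset.countP (fun e => splitVal S e = 1)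
      (((Finset.Icc 1 α).image (tV : ℕ → Vtx N m)).powersetCard 4).val = 0 := by
    rw [Multiset.countP_eq_zero]
    intro e he
    simp [hB0 e he]
  have c3 : Multiset.countP (fun e => splitVal S e = 1)
      ((Finset.univ : Finset (Fin N)).val.bind varEdges) ≤ 2 * N := by
    refine le_trans (Multiset.countP_le_card _ _) ?_
    rw [Multiset.card_bind]
    change (Finset.univ.sum fun i => Multiset.card (varEdges (m := m) i)) ≤ 2 * N
    simp [varEdges, mul_comm]
  have c4 : Multiset.countP (fun e => splitVal S e = 1)
      ((Finset.univ : Finset (Fin m)).val.bind (clauseEdges φ)) ≤ 4 * m := by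
    refine le_trans (Multiset.countP_le_card _ _) ?_
    rw [Multiset.card_bind]
    change (Finset.univ.sum fun j => Multiset.card (clauseEdges φ j)) ≤ 4 * m
    simp [clauseEdges, mul_comm]
  omega
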